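/- Let W_i, W_c be real m × p matrices, U_i, U_c real m × n matrices, b_i, b_c ∈ ℝᵐ, and let x, x̂ ∈ ℝᵖ, h, ĥ ∈ ℝⁿ. Define i(x,h) = σ∘(W_i·x + U_i·h + b_i) and ci(x,h) = tanh∘(W_c·x + U_c·h + b_c). Then ‖i(x̂,ĥ) ⊙ ci(x̂,ĥ) − i(x,h) ⊙ ci(x,h)‖ ≤ (17/16) · ((‖W_i‖ + ‖W_c‖)·‖x̂ − x‖ + (‖U_i‖ + ‖U_c‖)·‖ĥ − h‖). -/

import Mathlib

/-- The logistic sigmoid `σ(x) = 1 / (1 + e^{-x})`. -/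
noncomputable def sigmoid (x : ℝ) : ℝ := 1 / (1 + Real.exp (-x))

/-- Componentwise application of `f : ℝ → ℝ` to a vector of `ℝⁿ`. -/
noncomputable def cwise {n : ℕ} (f : ℝ → ℝ) (v : EuclideanSpace ℝ (Fin n)) :
    EuclideanSpace ℝ (Fin n) := WithLp.toLp 2 (fun i => f (v i))

/-- Hadamard (componentwise) product of vectors of `ℝⁿ`. -/
def hadam {n : ℕ} (v w : EuclideanSpace ℝ (Fin n)) : EuclideanSpace ℝ (Fin n) :=
  WithLp.toLp 2 (fun i => v i * w i)

/-- The operator norm of a real matrix with respect to Euclidean norms. -/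
noncomputable def matOpNorm {m n : ℕ} (W : Matrix (Fin m) (Fin n) ℝ) : ℝ :=
  ‖LinearMap.toContinuousLinearMap (Matrix.toEuclideanLin W)‖

lemma sigmoid_hasDerivAt (x : ℝ) :
    HasDerivAt sigmoid (Real.exp (-x) / (1 + Real.exp (-x)) ^ 2) x := by
  have h1 : HasDerivAt (fun x : ℝ => 1 + Real.exp (-x)) (-Real.exp (-x)) x := by
    simpa using (((Real.hasDerivAt_exp (-x)).comp x (hasDerivAt_neg x))).const_add 1
  have hne : (1 : ℝ) + Real.exp (-x) ≠ 0 := by positivity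
  have := h1.inv hne
  have hfun : sigmoid = fun x : ℝ => (1 + Real.exp (-x))⁻¹ :=
    funext fun x => one_div _
  rw [hfun]
  exact this.congr_deriv (by ring)
lemma abs_sigmoid_le (x : ℝ) : |sigmoid x| ≤ 1 := by
  have h0 : (0:ℝ) < 1 + Real.exp (-x) := by positivity
  rw [sigmoid, abs_of_nonneg (by positivity), div_le_one h0]
  linarith [Real.exp_pos (-x)]

lemma sigmoid_lip (a b : ℝ) : |sigmoid a - sigmoid b| ≤ |a - b| := by
  have := convex_univ.norm_image_sub_le_of_norm_hasDerivWithin_le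
    (f := sigmoid) (f' := fun x => Real.exp (-x) / (1 + Real.exp (-x)) ^ 2) (C := 1)
    (fun x _ => (sigmoid_hasDerivAt x).hasDerivWithinAt)
    (fun x _ => by
      rw [Real.norm_eq_abs, abs_of_nonneg (by positivity), div_le_one (by positivity)]
      nlinarith [Real.exp_pos (-x)])
    (Set.mem_univ b) (Set.mem_univ a)
  simpa using this

lemma tanh_hasDerivAt (x : ℝ) :
    HasDerivAt Real.tanh (1 / Real.cosh x ^ 2) x := by
  have := (Real.hasDerivAt_sinh x).div (Real.hasDerivAt_cosh x) (Real.cosh_pos x).ne'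
  have hfun : Real.tanh = fun x => Real.sinh x / Real.cosh x :=
    funext fun x => Real.tanh_eq_sinh_div_cosh x
  rw [hfun]
  refine this.congr_deriv ?_
  have := Real.cosh_sq_sub_sinh_sq x
  rw [show Real.cosh x * Real.cosh x - Real.sinh x * Real.sinh x = 1 by nlinarith]

lemma abs_tanh_le (x : ℝ) : |Real.tanh x| ≤ 1 := by
  rw [Real.tanh_eq_sinh_div_cosh, abs_div,
    abs_of_pos (Real.cosh_pos x), div_le_one (Real.cosh_pos x), abs_le]
  constructor <;> nlinarith [Real.exp_pos x, Real.exp_pos (-x), Real.cosh_eq x, Real.sinh_eq x]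

lemma tanh_lip (a b : ℝ) : |Real.tanh a - Real.tanh b| ≤ |a - b| := by
  have := convex_univ.norm_image_sub_le_of_norm_hasDerivWithin_le
    (f := Real.tanh) (f' := fun x => 1 / Real.cosh x ^ 2) (C := 1)
    (fun x _ => (tanh_hasDerivAt x).hasDerivWithinAt)
    (fun x _ => by
      rw [Real.norm_eq_abs, abs_of_nonneg (by positivity), div_le_one (by positivity)]
      nlinarith [Real.one_le_cosh x])
    (Set.mem_univ b) (Set.mem_univ a)
  simpa using this

lemma enorm_mono {m : ℕ} (u v : EuclideanSpace ℝ (Fin m)) (h : ∀ i, |u i| ≤ |v i|) :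
    ‖u‖ ≤ ‖v‖ := by
  rw [EuclideanSpace.norm_eq, EuclideanSpace.norm_eq]
  apply Real.sqrt_le_sqrt
  apply Finset.sum_le_sum
  intro i _
  simp only [Real.norm_eq_abs]
  exact pow_le_pow_left₀ (abs_nonneg _) (h i) 2

lemma enorm_congr {m : ℕ} (u v : EuclideanSpace ℝ (Fin m)) (h : ∀ i, |u i| = |v i|) :
    ‖u‖ = ‖v‖ :=
  le_antisymm (enorm_mono u v fun i => (h i).le) (enorm_mono v u fun i => (h i).ge)

lemma matOpNorm_bound {m n : ℕ} (W : Matrix (Fin m) (Fin n) ℝ) (v : EuclideanSpace ℝ (Fin n)) :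
    ‖Matrix.toEuclideanLin W v‖ ≤ matOpNorm W * ‖v‖ := by
  simpa [matOpNorm] using (LinearMap.toContinuousLinearMap (Matrix.toEuclideanLin W)).le_opNorm v

/-- Perturbation bound for the product of the input gate. -/
theorem input_gate_cell_input_perturbation_le
    (m n p : ℕ)
    (Wi Wc : Matrix (Fin m) (Fin p) ℝ) (Ui Uc : Matrix (Fin m) (Fin n) ℝ)
    (bi bc : EuclideanSpace ℝ (Fin m))
    (x xhat : EuclideanSpace ℝ (Fin p)) (h hhat : EuclideanSpace ℝ (Fin n))
    (igate : EuclideanSpace ℝ (Fin p) → EuclideanSpace ℝ (Fin n) → EuclideanSpace ℝ (Fin m))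
    (ci : EuclideanSpace ℝ (Fin p) → EuclideanSpace ℝ (Fin n) → EuclideanSpace ℝ (Fin m))
    (higate : ∀ x' h', igate x' h' =
      cwise sigmoid (Matrix.toEuclideanLin Wi x' + Matrix.toEuclideanLin Ui h' + bi))
    (hci : ∀ x' h', ci x' h' =
      cwise Real.tanh (Matrix.toEuclideanLin Wc x' + Matrix.toEuclideanLin Uc h' + bc)) :
    ‖hadam (igate xhat hhat) (ci xhat hhat) - hadam (igate x h) (ci x h)‖ ≤
      (17 / 16) * ((matOpNorm Wi + matOpNorm Wc) * ‖xhat - x‖ +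
        (matOpNorm Ui + matOpNorm Uc) * ‖hhat - h‖) := by
  set A := Matrix.toEuclideanLin Wi x + Matrix.toEuclideanLin Ui h + bi with hA
  set A' := Matrix.toEuclideanLin Wi xhat + Matrix.toEuclideanLin Ui hhat + bi with hA'
  set C := Matrix.toEuclideanLin Wc x + Matrix.toEuclideanLin Uc h + bc with hC
  set C' := Matrix.toEuclideanLin Wc xhat + Matrix.toEuclideanLin Uc hhat + bc with hC'
  set d := hadam (igate xhat hhat) (ci xhat hhat) - hadam (igate x h) (ci x h) with hd
  have key : ∀ k, |d k| ≤ |(A' - A) k| + |(C' - C) k| := by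
    intro k
    have hdk : d k = sigmoid (A' k) * Real.tanh (C' k) - sigmoid (A k) * Real.tanh (C k) := by
      simp only [hd, higate, hci, hadam, cwise, PiLp.sub_apply, PiLp.toLp_apply, hA, hA', hC, hC']
    have h1 := abs_sigmoid_le (A' k)
    have h2 := abs_tanh_le (C k)
    have h3 := tanh_lip (C' k) (C k)
    have h4 := sigmoid_lip (A' k) (A k)
    have hsub : (A' - A) k = A' k - A k := by simp [PiLp.sub_apply]
    have hsub' : (C' - C) k = C' k - C k := by simp [PiLp.sub_apply]
    rw [hdk, hsub, hsub']
    have expand : sigmoid (A' k) * Real.tanh (C' k) - sigmoid (A k) * Real.tanh (C k)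
        = sigmoid (A' k) * (Real.tanh (C' k) - Real.tanh (C k))
          + (sigmoid (A' k) - sigmoid (A k)) * Real.tanh (C k) := by ring
    calc |sigmoid (A' k) * Real.tanh (C' k) - sigmoid (A k) * Real.tanh (C k)|
        ≤ |sigmoid (A' k) * (Real.tanh (C' k) - Real.tanh (C k))|
          + |(sigmoid (A' k) - sigmoid (A k)) * Real.tanh (C k)| := by
          rw [expand]; exact abs_add_le _ _
      _ = |sigmoid (A' k)| * |Real.tanh (C' k) - Real.tanh (C k)|
          + |sigmoid (A' k) - sigmoid (A k)| * |Real.tanh (C k)| := by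
          rw [abs_mul, abs_mul]
      _ ≤ |A' k - A k| + |C' k - C k| := by
          nlinarith [abs_nonneg (Real.tanh (C' k) - Real.tanh (C k)),
            abs_nonneg (sigmoid (A' k) - sigmoid (A k)), abs_nonneg (sigmoid (A' k)),
            abs_nonneg (Real.tanh (C k)), abs_nonneg (A' k - A k), abs_nonneg (C' k - C k)]
      _ = |(A' - A) k| + |(C' - C) k| := by rw [hsub, hsub']
  -- norm of d bounded by ‖A' - A‖ + ‖C' - C‖
  have step1 : ‖d‖ ≤ ‖A' - A‖ + ‖C' - C‖ := by
    let w1 : EuclideanSpace ℝ (Fin m) := WithLp.toLp 2 (fun k => |(A' - A) k|)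
    let w2 : EuclideanSpace ℝ (Fin m) := WithLp.toLp 2 (fun k => |(C' - C) k|)
    have h1 : ‖d‖ ≤ ‖w1 + w2‖ := by
      apply enorm_mono
      intro k
      have happ : (w1 + w2) k = |(A' - A) k| + |(C' - C) k| := rfl
      rw [happ]
      exact (key k).trans (le_abs_self _)
    have hw1 : ‖w1‖ = ‖A' - A‖ := enorm_congr _ _ fun i => abs_abs _
    have hw2 : ‖w2‖ = ‖C' - C‖ := enorm_congr _ _ fun i => abs_abs _
    calc ‖d‖ ≤ ‖w1 + w2‖ := h1
      _ ≤ ‖w1‖ + ‖w2‖ := norm_add_le _ _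
      _ = ‖A' - A‖ + ‖C' - C‖ := by rw [hw1, hw2]
  have stepA : ‖A' - A‖ ≤ matOpNorm Wi * ‖xhat - x‖ + matOpNorm Ui * ‖hhat - h‖ := by
    have hdiff : A' - A = Matrix.toEuclideanLin Wi (xhat - x)
        + Matrix.toEuclideanLin Ui (hhat - h) := by
      rw [hA', hA, map_sub, map_sub]; abel
    rw [hdiff]
    exact le_trans (norm_add_le _ _) (add_le_add (matOpNorm_bound _ _) (matOpNorm_bound _ _))
  have stepC : ‖C' - C‖ ≤ matOpNorm Wc * ‖xhat - x‖ + matOpNorm Uc * ‖hhat - h‖ := by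
    have hdiff : C' - C = Matrix.toEuclideanLin Wc (xhat - x)
        + Matrix.toEuclideanLin Uc (hhat - h) := by
      rw [hC', hC, map_sub, map_sub]; abel
    rw [hdiff]
    exact le_trans (norm_add_le _ _) (add_le_add (matOpNorm_bound _ _) (matOpNorm_bound _ _))
  have hWi : 0 ≤ matOpNorm Wi := norm_nonneg _
  have hWc : 0 ≤ matOpNorm Wc := norm_nonneg _
  have hUi : 0 ≤ matOpNorm Ui := norm_nonneg _
  have hUc : 0 ≤ matOpNorm Uc := norm_nonneg _
  have hx : 0 ≤ ‖xhat - x‖ := norm_nonneg _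
  have hh : 0 ≤ ‖hhat - h‖ := norm_nonneg _
  nlinarith [step1, stepA, stepC]
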